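/- Let F be a field, S ∈ F^{m×n}, and suppose A ∈ F^{m×m} and B ∈ F^{n×n} are cyclic and diagonalizable over an extension field E of F; let U ∈ E^{m×m} and V ∈ E^{n×n} be invertible matrices such that U A U^{−1} and V^{−1} B V are diagonal. Then the dimension over F of the F-linear span of {A^i S B^j : i, j ≥ 0} equals the number of nonzero entries of the matrix U S V. -/

import Mathlib

open Matrix Polynomial Module Submodule

/-- Rank of a matrix is preserved by mapping entries through a field homomorphism. -/
lemma Matrix.rank_map_field {F E : Type*} [Field F] [Field E] (σ : F →+* E)
    {ι κ : Type*} [Fintype ι] [Fintype κ] [DecidableEq ι] [DecidableEq κ]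
    (A : Matrix ι κ F) : (A.map σ).rank = A.rank := by
  classical
  -- basis of the column space
  have hfr : Module.finrank F ↥(LinearMap.range A.mulVecLin) = A.rank := rfl
  let b : Basis (Fin A.rank) F ↥(LinearMap.range A.mulVecLin) :=
    Module.finBasisOfFinrankEq F _ hfr
  have hcol : ∀ k, (fun i => A i k) ∈ LinearMap.range A.mulVecLin := by
    intro k
    refine ⟨Pi.single k 1, ?_⟩
    ext i
    simp [Matrix.mulVecLin_apply, Matrix.mulVec_single]
  let B : Matrix ι (Fin A.rank) F := Matrix.of fun i j => (b j : ι → F) i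
  let C : Matrix (Fin A.rank) κ F := Matrix.of fun j k => b.repr ⟨fun i => A i k, hcol k⟩ j
  have hBC : A = B * C := by
    ext i k
    have h2 := congrFun (congrArg (Subtype.val) (b.sum_repr ⟨fun i => A i k, hcol k⟩)) i
    simp only [AddSubmonoidClass.coe_finset_sum, SetLike.val_smul, Finset.sum_apply,
      Pi.smul_apply, smul_eq_mul] at h2
    rw [Matrix.mul_apply]
    rw [← h2]
    exact Finset.sum_congr rfl fun j _ => mul_comm _ _
  -- left inverse of B
  have hBinj : LinearMap.ker B.mulVecLin = ⊥ := by
    rw [eq_bot_iff]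
    intro x hx
    simp only [LinearMap.mem_ker] at hx
    have hsum : (∑ j, x j • b j) = 0 := by
      apply Subtype.ext
      ext i
      have := congrFun hx i
      simp only [Matrix.mulVecLin_apply, Matrix.mulVec, dotProduct, Pi.zero_apply] at this
      simp only [AddSubmonoidClass.coe_finset_sum, SetLike.val_smul, Finset.sum_apply,
        Pi.smul_apply, smul_eq_mul, ZeroMemClass.coe_zero, Pi.zero_apply]
      rw [← this]
      exact Finset.sum_congr rfl fun j _ => mul_comm _ _
    have hz := Fintype.linearIndependent_iff.mp b.linearIndependent x hsum
    simpa using (funext hz : x = 0)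
  obtain ⟨l, hl⟩ := B.mulVecLin.exists_leftInverse_of_injective hBinj
  let L : Matrix (Fin A.rank) ι F := LinearMap.toMatrix' l
  have hLB : L * B = 1 := by
    have h1 : LinearMap.toMatrix' (l.comp B.mulVecLin) = L * B := by
      rw [LinearMap.toMatrix'_comp]
      congr 1
      rw [← Matrix.toLin'_apply', LinearMap.toMatrix'_toLin']
    rw [hl] at h1
    rw [← h1, LinearMap.toMatrix'_id]
  -- rank of C
  have hrC : C.rank = A.rank := by
    refine le_antisymm ?_ ?_
    · exact (C.rank_le_card_height).trans (by simp)
    · calc A.rank = (B * C).rank := by rw [← hBC]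
        _ ≤ C.rank := Matrix.rank_mul_le_right B C
  -- right inverse of C
  have hCsurj : LinearMap.range C.mulVecLin = ⊤ := by
    apply Submodule.eq_top_of_finrank_eq
    have : Module.finrank F ↥(LinearMap.range C.mulVecLin) = C.rank := rfl
    rw [this, hrC]
    simp [Module.finrank_pi]
  obtain ⟨r, hr⟩ := C.mulVecLin.exists_rightInverse_of_surjective hCsurj
  let R' : Matrix κ (Fin A.rank) F := LinearMap.toMatrix' r
  have hCR : C * R' = 1 := by
    have h1 : LinearMap.toMatrix' (C.mulVecLin.comp r) = C * R' := by
      rw [LinearMap.toMatrix'_comp]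
      congr 1
      rw [← Matrix.toLin'_apply', LinearMap.toMatrix'_toLin']
    rw [hr] at h1
    rw [← h1, LinearMap.toMatrix'_id]
  -- now transfer
  have hmap : A.map σ = B.map σ * C.map σ := by
    have h0 := congrArg (fun M => Matrix.map M σ) hBC
    simpa [Matrix.map_mul] using h0
  have hL : L.map σ * B.map σ = 1 := by
    rw [← Matrix.map_mul, hLB, Matrix.map_one σ σ.map_zero σ.map_one]
  have hR : C.map σ * R'.map σ = 1 := by
    rw [← Matrix.map_mul, hCR, Matrix.map_one σ σ.map_zero σ.map_one]
  refine le_antisymm ?_ ?_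
  · calc (A.map σ).rank = (B.map σ * C.map σ).rank := by rw [hmap]
      _ ≤ (B.map σ).rank := Matrix.rank_mul_le_left _ _
      _ ≤ Fintype.card (Fin A.rank) := (B.map σ).rank_le_card_width
      _ = A.rank := by simp
  · have hone : (L.map σ * A.map σ) * R'.map σ = 1 := by
      calc (L.map σ * A.map σ) * R'.map σ
          = (L.map σ * B.map σ) * (C.map σ * R'.map σ) := by
            rw [hmap]; simp only [Matrix.mul_assoc]
        _ = 1 := by rw [hL, hR, Matrix.one_mul]
    calc A.rank = Fintype.card (Fin A.rank) := by simp
      _ = (1 : Matrix (Fin A.rank) (Fin A.rank) E).rank := Matrix.rank_one.symm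
      _ = ((L.map σ * A.map σ) * R'.map σ).rank := by rw [hone]
      _ ≤ (L.map σ * A.map σ).rank := Matrix.rank_mul_le_left _ _
      _ ≤ (A.map σ).rank := Matrix.rank_mul_le_right _ _

/-- matrices as functions on pairs -/
def matrixFunEquiv (F a b : Type*) [Semiring F] : Matrix a b F ≃ₗ[F] (a × b → F) where
  toFun M := fun y => M y.1 y.2
  map_add' _ _ := rfl
  map_smul' _ _ := rfl
  invFun f := Matrix.of fun p q => f (p, q)
  left_inv _ := rfl
  right_inv _ := rfl

lemma finrank_span_range_matrix_eq_rank {F : Type*} [Field F] {a b ι : Type*}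
    [Fintype a] [Fintype b] [Fintype ι] (v : ι → Matrix a b F) :
    Module.finrank F (Submodule.span F (Set.range v)) =
      (Matrix.of fun i (pq : a × b) => v i pq.1 pq.2 : Matrix ι (a × b) F).rank := by
  rw [Matrix.rank_eq_finrank_span_row]
  have hM : (Matrix.of fun i (pq : a × b) => v i pq.1 pq.2 : Matrix ι (a × b) F) =
      ⇑(matrixFunEquiv F a b) ∘ v := rfl
  rw [hM]; unfold Matrix.row; rw [Set.range_comp]
  have : (⇑(matrixFunEquiv F a b) '' Set.range v)
      = ⇑((matrixFunEquiv F a b) : Matrix a b F →ₗ[F] (a × b → F)) '' Set.range v := rfl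
  rw [this, ← Submodule.map_span]
  exact (LinearEquiv.finrank_map_eq (matrixFunEquiv F a b) _).symm

lemma linearIndependent_matrix_iff_rank {F : Type*} [Field F] {a b ι : Type*}
    [Fintype a] [Fintype b] [Fintype ι] (v : ι → Matrix a b F) :
    LinearIndependent F v ↔ Fintype.card ι =
      (Matrix.of fun i (pq : a × b) => v i pq.1 pq.2 : Matrix ι (a × b) F).rank := by
  rw [linearIndependent_iff_card_eq_finrank_span, Set.finrank,
    finrank_span_range_matrix_eq_rank]

lemma LinearIndependent.matrix_map {F E : Type*} [Field F] [Field E] (σ : F →+* E)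
    {a b ι : Type*} [Fintype a] [Fintype b] [Fintype ι]
    [DecidableEq a] [DecidableEq b] [DecidableEq ι]
    {v : ι → Matrix a b F} (hv : LinearIndependent F v) :
    LinearIndependent E (fun i => (v i).map σ) := by
  rw [linearIndependent_matrix_iff_rank] at hv ⊢
  have : (Matrix.of fun i (pq : a × b) => (v i).map σ pq.1 pq.2 : Matrix ι (a × b) E)
      = (Matrix.of fun i (pq : a × b) => v i pq.1 pq.2 : Matrix ι (a × b) F).map σ := rfl
  rw [this, Matrix.rank_map_field σ]
  exact hv

section helpers
variable {E : Type*} [Field E] {k : ℕ}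

lemma conj_pow_mat (W D : Matrix (Fin k) (Fin k) E) (hW : IsUnit W.det) (i : ℕ) :
    (W⁻¹ * D * W) ^ i = W⁻¹ * D ^ i * W := by
  have hWu : IsUnit W := (Matrix.isUnit_iff_isUnit_det W).mpr hW
  have hu : (hWu.unit : Matrix (Fin k) (Fin k) E) = W := hWu.unit_spec
  have hinv : ((hWu.unit⁻¹ : _ˣ) : Matrix (Fin k) (Fin k) E) = W⁻¹ := by
    rw [Matrix.coe_units_inv, hu]
  have h := Units.conj_pow' hWu.unit D i
  rw [hinv, hu] at h
  exact h

lemma pow_mem_span_pows {F : Type*} [Field F] (A : Matrix (Fin k) (Fin k) F) (i : ℕ) :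
    A ^ i ∈ Submodule.span F (Set.range fun j : Fin k => A ^ (j : ℕ)) := by
  rcases Nat.eq_zero_or_pos k with hk | hk
  · subst hk
    have : A ^ i = 0 := by ext p q; exact p.elim0
    rw [this]; exact zero_mem _
  · have hch := Matrix.aeval_self_charpoly A
    have hmono := A.charpoly_monic
    have hdeg : A.charpoly.natDegree = k := by
      simpa using A.charpoly_natDegree_eq_dim
    have hmod : A ^ i = Polynomial.aeval A ((X : F[X]) ^ i %ₘ A.charpoly) := by
      have hdiv := Polynomial.modByMonic_add_div ((X : F[X]) ^ i) A.charpoly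
      calc A ^ i = Polynomial.aeval A ((X : F[X]) ^ i) := by simp
        _ = Polynomial.aeval A ((X : F[X]) ^ i %ₘ A.charpoly
              + A.charpoly * ((X : F[X]) ^ i /ₘ A.charpoly)) := by rw [hdiv]
        _ = Polynomial.aeval A ((X : F[X]) ^ i %ₘ A.charpoly) := by
              rw [map_add, _root_.map_mul, hch, zero_mul, add_zero]
    have hd2 : ((X : F[X]) ^ i %ₘ A.charpoly).natDegree < k := by
      rcases eq_or_ne ((X : F[X]) ^ i %ₘ A.charpoly) 0 with h0 | h0
      · rw [h0]; simpa using hk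
      · have := Polynomial.degree_modByMonic_lt ((X : F[X]) ^ i) hmono
        have h2 := Polynomial.natDegree_lt_natDegree h0 this
        rwa [hdeg] at h2
    rw [hmod, Polynomial.aeval_eq_sum_range' hd2]
    apply Submodule.sum_mem
    intro j hj
    apply Submodule.smul_mem
    exact Submodule.subset_span ⟨⟨j, Finset.mem_range.mp hj⟩, rfl⟩

lemma linearIndependent_pows {F : Type*} [Field F] (A : Matrix (Fin k) (Fin k) F)
    (hA : minpoly F A = A.charpoly) :
    LinearIndependent F (fun j : Fin k => A ^ (j : ℕ)) := by
  rw [Fintype.linearIndependent_iff]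
  intro g hg
  by_contra hne
  push_neg at hne
  obtain ⟨j0, hj0⟩ := hne
  have hk : 0 < k := j0.pos
  set q : F[X] := ∑ j : Fin k, Polynomial.C (g j) * (X : F[X]) ^ (j : ℕ) with hq
  have hcoeff : ∀ j : Fin k, q.coeff (j : ℕ) = g j := by
    intro j
    rw [hq, Polynomial.finset_sum_coeff]
    rw [Finset.sum_eq_single j]
    · simp
    · intro j' _ hj'
      rw [Polynomial.coeff_C_mul, Polynomial.coeff_X_pow, if_neg, mul_zero]
      exact fun h => hj' (Fin.val_injective h.symm)
    · simp
  have hq0 : q ≠ 0 := fun h => hj0 (by rw [← hcoeff j0, h, Polynomial.coeff_zero])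
  have haq : Polynomial.aeval A q = 0 := by
    rw [hq, map_sum]
    rw [← hg]
    refine Finset.sum_congr rfl fun j _ => ?_
    rw [_root_.map_mul, Polynomial.aeval_C, map_pow, Polynomial.aeval_X, Algebra.smul_def]
  have hdq : q.degree < (k : ℕ) := by
    rw [Polynomial.degree_lt_iff_coeff_zero]
    intro e he
    rw [hq, Polynomial.finset_sum_coeff]
    apply Finset.sum_eq_zero
    intro j _
    rw [Polynomial.coeff_C_mul, Polynomial.coeff_X_pow, if_neg, mul_zero]
    have : (j : ℕ) < k := j.isLt
    exact fun h => absurd (h ▸ he) (by exact_mod_cast not_le.mpr (by exact_mod_cast this))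
  have hle := minpoly.degree_le_of_ne_zero F A hq0 haq
  rw [hA] at hle
  have hdc : A.charpoly.degree = (k : ℕ) := by
    simpa using A.charpoly_degree_eq_dim
  rw [hdc] at hle
  exact absurd hdq (not_lt.mpr hle)

end helpers

lemma map_pow_mat {F E : Type*} [CommRing F] [CommRing E] (σ : F →+* E) {k : ℕ}
    [DecidableEq (Fin k)] (A : Matrix (Fin k) (Fin k) F) (i : ℕ) :
    (A ^ i).map σ = (A.map σ) ^ i := by
  induction i with
  | zero => simp [Matrix.map_one σ σ.map_zero σ.map_one]
  | succ n ih => rw [pow_succ, Matrix.map_mul, ih, pow_succ]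

/-- cyclic + diagonalizable over E implies distinct diagonal entries -/
lemma diag_injective_of_cyclic {F E : Type*} [Field F] [Field E] [Algebra F E] {k : ℕ}
    (A : Matrix (Fin k) (Fin k) F) (hA : minpoly F A = A.charpoly)
    (W : Matrix (Fin k) (Fin k) E) (hW : IsUnit W.det)
    (hdiag : (W * A.map (algebraMap F E) * W⁻¹).IsDiag) :
    Function.Injective (W * A.map (algebraMap F E) * W⁻¹).diag := by
  classical
  set σ := algebraMap F E
  set d := (W * A.map σ * W⁻¹).diag with hd
  have hDA : diagonal d = W * A.map σ * W⁻¹ := hdiag.diagonal_diag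
  have h1 : W⁻¹ * W = 1 := Matrix.nonsing_inv_mul W hW
  have h2 : W * W⁻¹ = 1 := Matrix.mul_nonsing_inv W hW
  have hA' : A.map σ = W⁻¹ * diagonal d * W := by
    rw [hDA]
    calc A.map σ = (W⁻¹ * W) * A.map σ * (W⁻¹ * W) := by rw [h1, Matrix.one_mul, Matrix.mul_one]
      _ = W⁻¹ * (W * A.map σ * W⁻¹) * W := by simp only [Matrix.mul_assoc]
  intro p p' hpp
  by_contra hne
  -- linear independence of powers over E
  have hli0 := linearIndependent_pows A hA
  have hli : LinearIndependent E (fun j : Fin k => (A.map σ) ^ (j : ℕ)) := by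
    have := LinearIndependent.matrix_map σ hli0
    have he : (fun j : Fin k => (A ^ (j : ℕ)).map σ) = fun j : Fin k => (A.map σ) ^ (j : ℕ) := by
      funext j; exact map_pow_mat σ A _
    rwa [he] at this
  -- the span bound
  set s : Finset E := Finset.univ.image d with hs
  have hcard : s.card < k := by
    have hle : s.card ≤ k := (Finset.card_image_le).trans (by simp)
    rcases lt_or_eq_of_le hle with h | h
    · exact h
    · exfalso
      have : Set.InjOn d (Finset.univ : Finset (Fin k)) := by
        apply Finset.injOn_of_card_image_eq
        rw [← hs, h]; simp
      exact hne (this (by simp) (by simp) hpp)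
  set w : {x // x ∈ s} → Matrix (Fin k) (Fin k) E := fun c =>
    W⁻¹ * diagonal (fun p => if d p = (c : E) then (1:E) else 0) * W with hw
  have hmem : ∀ j : Fin k, (A.map σ) ^ (j : ℕ) ∈ Submodule.span E (Set.range w) := by
    intro j
    have hpow : (A.map σ) ^ (j : ℕ) = W⁻¹ * diagonal (fun p => d p ^ (j : ℕ)) * W := by
      rw [hA', conj_pow_mat _ _ hW, Matrix.diagonal_pow]
      rfl
    have hdiagsum : diagonal (fun p => d p ^ (j : ℕ)) =
        ∑ c ∈ s.attach, ((c : E) ^ (j : ℕ)) • diagonal (fun p => if d p = (c : E) then (1:E) else 0) := by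
      have : ∀ p, d p ^ (j:ℕ) = ∑ c ∈ s.attach, (c : E) ^ (j:ℕ) * (if d p = (c : E) then (1:E) else 0) := by
        intro p
        rw [Finset.sum_attach s (fun c => c ^ (j:ℕ) * (if d p = c then (1:E) else 0))]
        rw [Finset.sum_congr rfl (fun c _ => by rw [mul_ite, mul_one, mul_zero])]
        rw [Finset.sum_ite_eq s (d p) (fun c => c ^ (j:ℕ))]
        rw [if_pos (Finset.mem_image_of_mem d (Finset.mem_univ p))]
      ext p q
      rcases eq_or_ne p q with rfl | hpq
      · simp only [Matrix.diagonal_apply_eq, Finset.sum_apply, Matrix.sum_apply,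
          Matrix.smul_apply, smul_eq_mul]
        rw [this p]
      · simp [Matrix.sum_apply, Matrix.diagonal_apply_ne _ hpq]
    rw [hpow, hdiagsum, Matrix.mul_sum, Finset.sum_mul]
    apply Submodule.sum_mem
    intro c _
    have heq : (W⁻¹ * ((c : E) ^ (j:ℕ) • diagonal (fun p => if d p = (c : E) then (1:E) else 0))) * W
        = (c : E) ^ (j:ℕ) • w c := by
      rw [mul_smul_comm, smul_mul_assoc, hw]
    rw [heq]
    exact Submodule.smul_mem _ _ (Submodule.subset_span ⟨c, rfl⟩)
  -- dimension contradiction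
  have hcardle : Fintype.card (Fin k) = (Set.range fun j : Fin k => (A.map σ) ^ (j : ℕ)).finrank E :=
    linearIndependent_iff_card_eq_finrank_span.mp hli
  have hsub : Submodule.span E (Set.range fun j : Fin k => (A.map σ) ^ (j : ℕ))
      ≤ Submodule.span E (Set.range w) :=
    Submodule.span_le.mpr (by rintro x ⟨j, rfl⟩; exact hmem j)
  have hmono := Submodule.finrank_mono hsub
  have hwle : (Set.range w).finrank E ≤ Fintype.card {x // x ∈ s} := finrank_range_le_card w
  rw [Fintype.card_coe] at hwle
  have : k ≤ s.card := by
    calc k = Fintype.card (Fin k) := by simp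
      _ = (Set.range fun j : Fin k => (A.map σ) ^ (j : ℕ)).finrank E := hcardle
      _ ≤ (Set.range w).finrank E := hmono
      _ ≤ s.card := hwle
  omega

/-- If A and B are cyclic and diagonalized over E by invertible matrices U and V
(U A U⁻¹ and V⁻¹ B V diagonal), then the dimension of the span of {A^i S B^j}
equals the number of nonzero entries of U S V. -/
theorem finrank_span_eq_card_nonzero_entries
    {F E : Type*} [Field F] [Field E] [Algebra F E] {m n : ℕ}
    (A : Matrix (Fin m) (Fin m) F) (B : Matrix (Fin n) (Fin n) F)
    (S : Matrix (Fin m) (Fin n) F)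
    (hA : minpoly F A = A.charpoly) (hB : minpoly F B = B.charpoly)
    (U : Matrix (Fin m) (Fin m) E) (V : Matrix (Fin n) (Fin n) E)
    (hU : IsUnit U.det) (hV : IsUnit V.det)
    (hUA : (U * A.map (algebraMap F E) * U⁻¹).IsDiag)
    (hBV : (V⁻¹ * B.map (algebraMap F E) * V).IsDiag) :
    Module.finrank F (Submodule.span F
        {M : Matrix (Fin m) (Fin n) F | ∃ i j : ℕ, M = A ^ i * S * B ^ j}) =
      Nat.card {p : Fin m × Fin n // (U * S.map (algebraMap F E) * V) p.1 p.2 ≠ 0} := by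
  classical
  set σ : F →+* E := algebraMap F E with hσdef
  -- Step 1 : reduce to a finite family
  set g : Fin m × Fin n → Matrix (Fin m) (Fin n) F :=
    fun x => A ^ (x.1 : ℕ) * S * B ^ (x.2 : ℕ) with hg
  have hset : Submodule.span F {M : Matrix (Fin m) (Fin n) F | ∃ i j : ℕ, M = A ^ i * S * B ^ j}
      = Submodule.span F (Set.range g) := by
    apply le_antisymm
    · rw [Submodule.span_le]
      rintro M ⟨i, j, rfl⟩
      let f1 : Matrix (Fin m) (Fin m) F →ₗ[F] Matrix (Fin m) (Fin n) F :=
        { toFun := fun M => M * (S * B ^ j)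
          map_add' := fun M N => Matrix.add_mul M N _
          map_smul' := fun c M => Matrix.smul_mul c M _ }
      have h1 := Submodule.apply_mem_span_image_of_mem_span f1 (pow_mem_span_pows A i)
      have h1' : A ^ i * S * B ^ j ∈
          Submodule.span F (⇑f1 '' Set.range fun l : Fin m => A ^ (l : ℕ)) := by
        have : f1 (A ^ i) = A ^ i * S * B ^ j := by
          show A ^ i * (S * B ^ j) = A ^ i * S * B ^ j
          rw [Matrix.mul_assoc]
        rwa [this] at h1
      refine Submodule.span_le.mpr ?_ h1'
      rintro _ ⟨_, ⟨l, rfl⟩, rfl⟩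
      show f1 (A ^ (l : ℕ)) ∈ Submodule.span F (Set.range g)
      let f2 : Matrix (Fin n) (Fin n) F →ₗ[F] Matrix (Fin m) (Fin n) F :=
        { toFun := fun N => (A ^ (l : ℕ) * S) * N
          map_add' := fun M N => Matrix.mul_add _ M N
          map_smul' := fun c N => Matrix.mul_smul _ c N }
      have h2 := Submodule.apply_mem_span_image_of_mem_span f2 (pow_mem_span_pows B j)
      have h2' : f1 (A ^ (l : ℕ)) ∈
          Submodule.span F (⇑f2 '' Set.range fun l2 : Fin n => B ^ (l2 : ℕ)) := by
        have : f2 (B ^ j) = f1 (A ^ (l : ℕ)) := by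
          show (A ^ (l : ℕ) * S) * B ^ j = A ^ (l : ℕ) * (S * B ^ j)
          rw [Matrix.mul_assoc]
        rwa [this] at h2
      refine Submodule.span_le.mpr ?_ h2'
      rintro _ ⟨_, ⟨l2, rfl⟩, rfl⟩
      exact Submodule.subset_span ⟨(l, l2), rfl⟩
    · rw [Submodule.span_le]
      rintro _ ⟨x, rfl⟩
      exact Submodule.subset_span ⟨(x.1 : ℕ), (x.2 : ℕ), rfl⟩
  rw [hset, finrank_span_range_matrix_eq_rank g]
  set P : Matrix (Fin m × Fin n) (Fin m × Fin n) F :=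
    Matrix.of fun x pq => g x pq.1 pq.2 with hP
  rw [← Matrix.rank_map_field σ P]
  -- diagonalization data
  set dA := (U * A.map σ * U⁻¹).diag with hdA
  have hinjA : Function.Injective dA := diag_injective_of_cyclic A hA U hU hUA
  have hDAeq : diagonal dA = U * A.map σ * U⁻¹ := hUA.diagonal_diag
  have hU1 : U⁻¹ * U = 1 := nonsing_inv_mul U hU
  have hU2 : U * U⁻¹ = 1 := mul_nonsing_inv U hU
  have hAconj : A.map σ = U⁻¹ * diagonal dA * U := by
    rw [hDAeq]
    calc A.map σ = (U⁻¹ * U) * A.map σ * (U⁻¹ * U) := by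
          rw [hU1, Matrix.one_mul, Matrix.mul_one]
      _ = U⁻¹ * (U * A.map σ * U⁻¹) * U := by simp only [Matrix.mul_assoc]
  have hVinvdet : IsUnit (V⁻¹).det := isUnit_nonsing_inv_det V hV
  have hVinvinv : (V⁻¹)⁻¹ = V := nonsing_inv_nonsing_inv V hV
  set dB := (V⁻¹ * B.map σ * V).diag with hdB
  have hinjB : Function.Injective dB := by
    have := diag_injective_of_cyclic B hB V⁻¹ hVinvdet (by rwa [hVinvinv])
    rwa [hVinvinv] at this
  have hDBeq : diagonal dB = V⁻¹ * B.map σ * V := hBV.diagonal_diag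
  have hV1 : V⁻¹ * V = 1 := nonsing_inv_mul V hV
  have hV2 : V * V⁻¹ = 1 := mul_nonsing_inv V hV
  have hBconj : B.map σ = V * diagonal dB * V⁻¹ := by
    rw [hDBeq]
    calc B.map σ = (V * V⁻¹) * B.map σ * (V * V⁻¹) := by
          rw [hV2, Matrix.one_mul, Matrix.mul_one]
      _ = V * (V⁻¹ * B.map σ * V) * V⁻¹ := by simp only [Matrix.mul_assoc]
  have hApow : ∀ i : ℕ, (A.map σ) ^ i = U⁻¹ * diagonal dA ^ i * U := fun i => by
    rw [hAconj, conj_pow_mat _ _ hU]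
  have hBpow : ∀ j : ℕ, (B.map σ) ^ j = V * diagonal dB ^ j * V⁻¹ := fun j => by
    rw [hBconj]
    have := conj_pow_mat (V⁻¹) (diagonal dB) hVinvdet j
    rwa [hVinvinv] at this
  set T := U * S.map σ * V with hT
  set K : Matrix (Fin m × Fin n) (Fin m × Fin n) E :=
    kroneckerMap (· * ·) (U⁻¹)ᵀ V⁻¹ with hK
  set Q : Matrix (Fin m × Fin n) (Fin m × Fin n) E := Matrix.of fun x y =>
    dA y.1 ^ (x.1 : ℕ) * T y.1 y.2 * dB y.2 ^ (x.2 : ℕ) with hQ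
  have hMent : ∀ (i j : ℕ) (p : Fin m) (q : Fin n),
      (diagonal dA ^ i * T * diagonal dB ^ j) p q = dA p ^ i * T p q * dB q ^ j := by
    intro i j p q
    rw [Matrix.diagonal_pow, Matrix.diagonal_pow, Matrix.mul_diagonal, Matrix.diagonal_mul,
      Pi.pow_apply, Pi.pow_apply]
  have hPQK : P.map σ = Q * K := by
    ext x y'
    have hrow : (A ^ (x.1 : ℕ) * S * B ^ (x.2 : ℕ)).map σ
        = U⁻¹ * (diagonal dA ^ (x.1 : ℕ) * T * diagonal dB ^ (x.2 : ℕ)) * V⁻¹ := by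
      rw [Matrix.map_mul, Matrix.map_mul, map_pow_mat, map_pow_mat, hApow, hBpow, hT]
      simp only [Matrix.mul_assoc]
    have hLent : (P.map σ) x y'
        = (U⁻¹ * (diagonal dA ^ (x.1 : ℕ) * T * diagonal dB ^ (x.2 : ℕ)) * V⁻¹) y'.1 y'.2 := by
      have := congrFun (congrFun hrow y'.1) y'.2
      exact this
    rw [hLent, Matrix.mul_apply]
    simp only [Matrix.mul_apply, hMent, hQ, Matrix.of_apply, hK, Matrix.kroneckerMap_apply,
      Matrix.transpose_apply, Fintype.sum_prod_type, Finset.sum_mul]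
    rw [Finset.sum_comm]
    exact Finset.sum_congr rfl fun p _ => Finset.sum_congr rfl fun q _ => by ring
  have hKdet : IsUnit K.det := by
    rw [hK, Matrix.det_kronecker, Matrix.det_transpose]
    exact ((isUnit_nonsing_inv_det U hU).pow _).mul ((isUnit_nonsing_inv_det V hV).pow _)
  rw [hPQK, Matrix.rank_mul_eq_left_of_isUnit_det K Q hKdet]
  set Wv : Matrix (Fin m × Fin n) (Fin m × Fin n) E :=
    kroneckerMap (· * ·) (vandermonde dA)ᵀ (vandermonde dB)ᵀ with hWv
  have hQW : Q = Wv * diagonal (fun y : Fin m × Fin n => T y.1 y.2) := by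
    ext x y
    rw [Matrix.mul_diagonal]
    simp only [hQ, hWv, Matrix.of_apply, Matrix.kroneckerMap_apply, Matrix.transpose_apply,
      Matrix.vandermonde_apply]
    ring
  have hWvdet : IsUnit Wv.det := by
    rw [hWv, Matrix.det_kronecker, Matrix.det_transpose, Matrix.det_transpose]
    have h1 : (vandermonde dA).det ≠ 0 := Matrix.det_vandermonde_ne_zero_iff.mpr hinjA
    have h2 : (vandermonde dB).det ≠ 0 := Matrix.det_vandermonde_ne_zero_iff.mpr hinjB
    exact ((isUnit_iff_ne_zero.mpr h1).pow _).mul ((isUnit_iff_ne_zero.mpr h2).pow _)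
  rw [hQW, Matrix.rank_mul_eq_right_of_isUnit_det Wv _ hWvdet, Matrix.rank_diagonal]
  rw [Nat.card_eq_fintype_card]
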